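/- Let d ≥ 1, σ > 0 and α > 1. Let (g_z)_{z∈ℤ^d} be real random variables on a probability space such that each g_z has the Gaussian distribution N(0, σ²) (no assumption is made on the joint distribution or covariance of the g_z's). Let Π = Σ_{z∈ℤ^d} δ_{‖z‖^α + g_z}, where ‖·‖ is the ℓ∞ norm on ℤ^d. Then Π is deletion singular: for every finite nonempty S ⊆ ℤ^d, the laws of Π and of Π_S = Σ_{z∈ℤ^d∖S} δ_{‖z‖^α + g_z} are mutually singular after completion. -/

import Mathlib

open MeasureTheory ProbabilityTheory Filter Set

/-- The configuration `Π_S = Σ_{z ∈ ℤ^d ∖ S} δ_{‖z‖^α + g(z)}` as a Borel measure on `ℝ`,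
where `‖·‖` is the `ℓ∞` norm on `ℤ^d = (Fin d → ℤ)`. -/
noncomputable def latticeConfig {d : ℕ} (α : ℝ) (g : (Fin d → ℤ) → ℝ) (S : Set (Fin d → ℤ)) :
    Measure ℝ :=
  Measure.sum (fun z : {z : Fin d → ℤ // z ∉ S} => Measure.dirac (‖z.1‖ ^ α + g z.1))

open Real
open scoped NNReal ENNReal

namespace DelSingAux

/-- sup norm as a natural number -/
def Nz (z : Fin d → ℤ) : ℕ := Finset.univ.sup fun i => (z i).natAbs

lemma norm_eq_Nz (z : Fin d → ℤ) : ‖z‖ = (Nz z : ℝ) := by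
  rw [Pi.norm_def]
  have h1 : (Finset.univ.sup fun b => ‖z b‖₊)
      = ((Nz z : NNReal)) := by
    rw [Nz, Finset.comp_sup_eq_sup_comp (Nat.cast : ℕ → NNReal)
      (fun x y => by simp [Nat.cast_max]) (by simp)]
    refine Finset.sup_congr rfl fun i _ => ?_
    exact (NNReal.natCast_natAbs (z i)).symm
  rw [h1]
  simp

noncomputable def box (d n : ℕ) : Finset (Fin d → ℤ) :=
  Fintype.piFinset fun _ => Finset.Icc (-(n : ℤ)) (n : ℤ)

lemma mem_box {n : ℕ} {z : Fin d → ℤ} : z ∈ box d n ↔ Nz z ≤ n := by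
  rw [box, Fintype.mem_piFinset, Nz, Finset.sup_le_iff]
  refine forall_congr' fun i => ?_
  simp only [Finset.mem_Icc, Finset.mem_univ, true_implies]
  rw [← abs_le, Int.abs_eq_natAbs]
  omega

lemma card_box (n : ℕ) : (box d n).card = (2 * n + 1) ^ d := by
  rw [box, Fintype.card_piFinset]
  simp only [Int.card_Icc]
  rw [Finset.prod_const, Finset.card_univ, Fintype.card_fin]
  congr 1
  omega

lemma Nz_pos_of_ne_zero {z : Fin d → ℤ} (hz : z ≠ 0) : 1 ≤ Nz z := by
  obtain ⟨i, hi⟩ := Function.ne_iff.mp hz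
  have h1 : 1 ≤ (z i).natAbs := by
    have : z i ≠ 0 := hi
    omega
  exact le_trans h1 (Finset.le_sup (f := fun i => (z i).natAbs) (Finset.mem_univ i))


noncomputable def cseq (α : ℝ) (n : ℕ) : ℝ := ((n : ℝ) ^ α + ((n : ℝ) + 1) ^ α) / 2

noncomputable def gapR (α : ℝ) (k : ℕ) : ℝ := (k : ℝ) ^ α - ((k : ℝ) - 1) ^ α

variable {α : ℝ} (hα : 1 < α)

include hα

lemma cseq_mono {k n : ℕ} (h : k ≤ n) : cseq α k ≤ cseq α n := by
  have h1 : (k : ℝ) ≤ (n : ℝ) := by exact_mod_cast h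
  have h2 := rpow_le_rpow (by positivity) h1 (by linarith : (0:ℝ) ≤ α)
  have h3 := rpow_le_rpow (by positivity) (by linarith : (k:ℝ) + 1 ≤ (n:ℝ) + 1)
    (by linarith : (0:ℝ) ≤ α)
  rw [cseq, cseq]; linarith

lemma convex_ineq {k : ℕ} (hk : 1 ≤ k) :
    2 * (k : ℝ) ^ α ≤ ((k : ℝ) - 1) ^ α + ((k : ℝ) + 1) ^ α := by
  have hk1 : (1 : ℝ) ≤ (k : ℝ) := by exact_mod_cast hk
  have hc := convexOn_rpow (le_of_lt hα)
  have h := hc.2 (show (k:ℝ) - 1 ∈ Ici (0:ℝ) by simp; linarith)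
    (show (k:ℝ) + 1 ∈ Ici (0:ℝ) by simp; linarith)
    (by norm_num : (0:ℝ) ≤ (1:ℝ)/2) (by norm_num : (0:ℝ) ≤ (1:ℝ)/2) (by norm_num)
  have harg : (1/2 : ℝ) • ((k:ℝ) - 1) + (1/2 : ℝ) • ((k:ℝ) + 1) = (k : ℝ) := by
    simp only [smul_eq_mul]; ring
  rw [harg] at h
  simp only [smul_eq_mul] at h
  linarith

lemma up_bound {k : ℕ} (hk : 1 ≤ k) : (k : ℝ) ^ α + gapR α k / 2 ≤ cseq α k := by
  have := convex_ineq hα hk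
  rw [gapR, cseq]; linarith

lemma down_bound {k n : ℕ} (hk : n + 1 ≤ k) :
    cseq α n ≤ (k : ℝ) ^ α - gapR α k / 2 := by
  have hk1 : ((n : ℝ)) + 1 ≤ (k : ℝ) := by exact_mod_cast hk
  have h1 : ((n : ℝ) + 1) ^ α ≤ (k : ℝ) ^ α :=
    rpow_le_rpow (by positivity) hk1 (by linarith)
  have h2 : (n : ℝ) ^ α ≤ ((k : ℝ) - 1) ^ α :=
    rpow_le_rpow (by positivity) (by linarith) (by linarith)
  rw [gapR, cseq]; linarith

lemma gap_lower {k : ℕ} (hk : 1 ≤ k) : (k : ℝ) ^ (α - 1) ≤ gapR α k := by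
  rcases eq_or_lt_of_le hk with h1 | h2
  · rw [gapR, ← h1]
    simp only [Nat.cast_one]
    rw [Real.one_rpow, Real.one_rpow, sub_self, Real.zero_rpow (by linarith : α ≠ 0)]
    norm_num
  · have hk2 : (2 : ℝ) ≤ (k : ℝ) := by exact_mod_cast h2
    set x := (k : ℝ) with hx
    have hx1 : (1 : ℝ) ≤ x - 1 := by linarith
    have hxpos : (0 : ℝ) < x := by linarith
    have hx1pos : (0 : ℝ) < x - 1 := by linarith
    have e1 : (x - 1) ^ α = (x - 1) * (x - 1) ^ (α - 1) := by
      nth_rewrite 2 [← Real.rpow_one (x-1)]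
      rw [← Real.rpow_add hx1pos]
      norm_num
    have e2 : x ^ α = x * x ^ (α - 1) := by
      nth_rewrite 2 [← Real.rpow_one x]
      rw [← Real.rpow_add hxpos]; norm_num
    have e3 : (x - 1) ^ (α - 1) ≤ x ^ (α - 1) :=
      rpow_le_rpow (by linarith) (by linarith) (by linarith)
    rw [gapR, ← hx, e1, e2]
    nlinarith [rpow_nonneg (le_of_lt hx1pos) (α - 1)]

lemma cseq_tendsto : Tendsto (cseq α) atTop atTop := by
  apply tendsto_atTop_mono' atTop (f₁ := fun n : ℕ => (n : ℝ) / 2)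
  · filter_upwards [eventually_ge_atTop 1] with n hn
    have hn1 : (1 : ℝ) ≤ (n : ℝ) := by exact_mod_cast hn
    have h1 : (n : ℝ) ^ (1:ℝ) ≤ (n : ℝ) ^ α :=
      rpow_le_rpow_of_exponent_le hn1 (le_of_lt hα)
    rw [Real.rpow_one] at h1
    have h2 : (0:ℝ) ≤ ((n:ℝ) + 1) ^ α := rpow_nonneg (by positivity) _
    rw [cseq]; linarith
  · exact (tendsto_natCast_atTop_atTop).atTop_div_const (by norm_num)


end DelSingAux

namespace DelSingAux

variable {v : ℝ≥0} (hv : v ≠ 0)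
include hv

lemma exp_mul_gaussianPDFReal (c x : ℝ) :
    rexp (c * x) * gaussianPDFReal 0 v x
      = rexp (c ^ 2 * v / 2) * gaussianPDFReal (c * v) v x := by
  have hv' : (v : ℝ) ≠ 0 := NNReal.coe_ne_zero.mpr hv
  simp only [gaussianPDFReal]
  rw [mul_left_comm, mul_left_comm (rexp (c ^ 2 * v / 2)), ← Real.exp_add, ← Real.exp_add]
  congr 2
  field_simp
  ring

lemma lintegral_exp_mul_gaussianPDF (c : ℝ) :
    ∫⁻ x, ENNReal.ofReal (rexp (c * x)) * gaussianPDF 0 v x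
      = ENNReal.ofReal (rexp (c ^ 2 * v / 2)) := by
  have h : ∀ x, ENNReal.ofReal (rexp (c * x)) * gaussianPDF 0 v x
      = ENNReal.ofReal (rexp (c ^ 2 * v / 2)) * gaussianPDF (c * v) v x := by
    intro x
    simp only [gaussianPDF_def]
    rw [← ENNReal.ofReal_mul (exp_nonneg _), ← ENNReal.ofReal_mul (exp_nonneg _),
      exp_mul_gaussianPDFReal hv c x]
  simp_rw [h]
  rw [lintegral_const_mul _ (measurable_gaussianPDF _ _),
    lintegral_gaussianPDF_eq_one _ hv, mul_one]

lemma gaussianReal_tail_Ici (t : ℝ) :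
    gaussianReal 0 v (Ici t) ≤ ENNReal.ofReal (rexp ((v : ℝ) / 2 - t)) := by
  rw [gaussianReal_apply 0 hv]
  have hmeas : Measurable fun x : ℝ =>
      ENNReal.ofReal (rexp (x - t)) * gaussianPDF 0 v x :=
    ((measurable_id.sub_const t).exp.ennreal_ofReal).mul (measurable_gaussianPDF _ _)
  calc ∫⁻ x in Ici t, gaussianPDF 0 v x
      ≤ ∫⁻ x in Ici t, ENNReal.ofReal (rexp (x - t)) * gaussianPDF 0 v x := by
        refine setLIntegral_mono hmeas fun x hx => ?_
        refine le_mul_of_one_le_left zero_le ?_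
        rw [show (1 : ℝ≥0∞) = ENNReal.ofReal 1 by simp]
        exact ENNReal.ofReal_le_ofReal (Real.one_le_exp (by simpa using hx))
    _ ≤ ∫⁻ x, ENNReal.ofReal (rexp (x - t)) * gaussianPDF 0 v x :=
        setLIntegral_le_lintegral _ _
    _ = ∫⁻ x, ENNReal.ofReal (rexp (-t)) *
          (ENNReal.ofReal (rexp (1 * x)) * gaussianPDF 0 v x) := by
        congr 1
        funext x
        rw [← mul_assoc, ← ENNReal.ofReal_mul (exp_nonneg _), ← Real.exp_add]
        ring_nf
    _ = ENNReal.ofReal (rexp (-t)) * ENNReal.ofReal (rexp ((1:ℝ) ^ 2 * v / 2)) := by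
        rw [lintegral_const_mul _ (f := fun x => ENNReal.ofReal (rexp (1 * x)) * gaussianPDF 0 v x)
          ((measurable_const_mul (1:ℝ)).exp.ennreal_ofReal.mul (measurable_gaussianPDF _ _)),
          lintegral_exp_mul_gaussianPDF hv]
    _ = ENNReal.ofReal (rexp ((v : ℝ) / 2 - t)) := by
        rw [← ENNReal.ofReal_mul (exp_nonneg _), ← Real.exp_add]
        congr 1
        congr 1
        ring

lemma gaussianReal_tail_Iic (t : ℝ) :
    gaussianReal 0 v (Iic (-t)) ≤ ENNReal.ofReal (rexp ((v : ℝ) / 2 - t)) := by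
  rw [gaussianReal_apply 0 hv]
  have hmeas : Measurable fun x : ℝ =>
      ENNReal.ofReal (rexp (-x - t)) * gaussianPDF 0 v x :=
    ((measurable_id.neg.sub_const t).exp.ennreal_ofReal).mul (measurable_gaussianPDF _ _)
  calc ∫⁻ x in Iic (-t), gaussianPDF 0 v x
      ≤ ∫⁻ x in Iic (-t), ENNReal.ofReal (rexp (-x - t)) * gaussianPDF 0 v x := by
        refine setLIntegral_mono hmeas fun x hx => ?_
        refine le_mul_of_one_le_left zero_le ?_
        rw [show (1 : ℝ≥0∞) = ENNReal.ofReal 1 by simp]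
        refine ENNReal.ofReal_le_ofReal (Real.one_le_exp ?_)
        have : x ≤ -t := hx
        linarith
    _ ≤ ∫⁻ x, ENNReal.ofReal (rexp (-x - t)) * gaussianPDF 0 v x :=
        setLIntegral_le_lintegral _ _
    _ = ∫⁻ x, ENNReal.ofReal (rexp (-t)) *
          (ENNReal.ofReal (rexp ((-1) * x)) * gaussianPDF 0 v x) := by
        congr 1
        funext x
        rw [← mul_assoc, ← ENNReal.ofReal_mul (exp_nonneg _), ← Real.exp_add]
        ring_nf
    _ = ENNReal.ofReal (rexp (-t)) * ENNReal.ofReal (rexp ((-1:ℝ) ^ 2 * v / 2)) := by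
        rw [lintegral_const_mul _ (f := fun x => ENNReal.ofReal (rexp ((-1) * x)) * gaussianPDF 0 v x)
          ((measurable_const_mul (-1:ℝ)).exp.ennreal_ofReal.mul (measurable_gaussianPDF _ _)),
          lintegral_exp_mul_gaussianPDF hv]
    _ = ENNReal.ofReal (rexp ((v : ℝ) / 2 - t)) := by
        rw [← ENNReal.ofReal_mul (exp_nonneg _), ← Real.exp_add]
        congr 1
        congr 1
        ring

lemma gaussianReal_tail_abs (t : ℝ) :
    gaussianReal 0 v {x : ℝ | t ≤ |x|} ≤ ENNReal.ofReal (2 * rexp ((v:ℝ)/2) * rexp (-t)) := by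
  have hsub : {x : ℝ | t ≤ |x|} ⊆ Iic (-t) ∪ Ici t := by
    intro x hx
    simp only [mem_setOf_eq] at hx
    rcases abs_cases x with ⟨h1, _⟩ | ⟨h1, _⟩
    · right; exact le_trans hx (le_of_eq h1)
    · left; simp only [mem_Iic]; have := hx.trans (le_of_eq h1); linarith
  calc gaussianReal 0 v {x : ℝ | t ≤ |x|}
      ≤ gaussianReal 0 v (Iic (-t) ∪ Ici t) := measure_mono hsub
    _ ≤ gaussianReal 0 v (Iic (-t)) + gaussianReal 0 v (Ici t) := measure_union_le _ _
    _ ≤ ENNReal.ofReal (rexp ((v:ℝ)/2 - t)) + ENNReal.ofReal (rexp ((v:ℝ)/2 - t)) :=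
        add_le_add (gaussianReal_tail_Iic hv t) (gaussianReal_tail_Ici hv t)
    _ = ENNReal.ofReal (2 * rexp ((v:ℝ)/2) * rexp (-t)) := by
        rw [← ENNReal.ofReal_add (exp_nonneg _) (exp_nonneg _)]
        congr 1
        rw [← two_mul, mul_assoc, ← Real.exp_add, ← sub_eq_add_neg]


end DelSingAux

namespace DelSingAux

lemma summable_series (d : ℕ) {β : ℝ} (hβ : 0 < β) :
    Summable (fun k : ℕ => ((2 * k + 1 : ℕ) : ℝ) ^ d * rexp (-(k : ℝ) ^ β / 2)) := by
  have h0 := tendsto_rpow_mul_exp_neg_mul_atTop_nhds_zero (((d : ℝ) + 2) / β) (1/2)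
    (by norm_num)
  have h1 : Tendsto (fun k : ℕ => (k : ℝ) ^ β) atTop atTop :=
    (tendsto_rpow_atTop hβ).comp tendsto_natCast_atTop_atTop
  have h2 := h0.comp h1
  have hsmall : ∀ᶠ k : ℕ in atTop,
      ((k : ℝ) ^ β) ^ (((d : ℝ) + 2) / β) * rexp (-(1/2) * (k : ℝ) ^ β)
        < ((3 : ℝ) ^ d)⁻¹ := by
    refine h2.eventually_lt_const ?_
    positivity
  refine summable_of_isBigO_nat
    (g := fun k : ℕ => 1 / (k : ℝ) ^ 2)
    (summable_one_div_nat_pow.mpr one_lt_two) ?_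
  refine Asymptotics.IsBigO.of_bound 1 ?_
  filter_upwards [hsmall, eventually_ge_atTop 1] with k hk hk1
  have hx1 : (1 : ℝ) ≤ (k : ℝ) := by exact_mod_cast hk1
  have hx0 : (0 : ℝ) < (k : ℝ) := by linarith
  set x := (k : ℝ)
  have hrw : (x ^ β) ^ (((d : ℝ) + 2) / β) = x ^ (d + 2 : ℕ) := by
    rw [← Real.rpow_mul (le_of_lt hx0)]
    have : β * (((d : ℝ) + 2) / β) = ((d + 2 : ℕ) : ℝ) := by
      push_cast
      field_simp
    rw [this, Real.rpow_natCast]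
  have hexp : rexp (-(1/2) * x ^ β) = rexp (-x ^ β / 2) := by ring_nf
  rw [hrw, hexp] at hk
  have hE : (0 : ℝ) ≤ rexp (-x ^ β / 2) := exp_nonneg _
  have h3 : ((2 * k + 1 : ℕ) : ℝ) ^ d ≤ (3 * x) ^ d := by
    refine pow_le_pow_left₀ (by positivity) ?_ d
    push_cast
    linarith
  have hnorm1 : ‖((2 * k + 1 : ℕ) : ℝ) ^ d * rexp (-x ^ β / 2)‖
      = ((2 * k + 1 : ℕ) : ℝ) ^ d * rexp (-x ^ β / 2) := by
    rw [Real.norm_eq_abs, abs_of_nonneg (by positivity)]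
  have hnorm2 : ‖1 / x ^ 2‖ = 1 / x ^ 2 := by
    rw [Real.norm_eq_abs, abs_of_nonneg (by positivity)]
  rw [hnorm1, hnorm2, one_mul]
  rw [le_div_iff₀ (by positivity : (0:ℝ) < x ^ 2)]
  have key : (3:ℝ) ^ d * (x ^ (d + 2) * rexp (-x ^ β / 2)) ≤ 1 := by
    have h4 : x ^ (d + 2) * rexp (-x ^ β / 2) ≤ ((3 : ℝ) ^ d)⁻¹ := le_of_lt hk
    calc (3:ℝ) ^ d * (x ^ (d + 2) * rexp (-x ^ β / 2))
        ≤ (3:ℝ) ^ d * ((3 : ℝ) ^ d)⁻¹ := by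
          refine mul_le_mul_of_nonneg_left h4 (by positivity)
      _ = 1 := by
          field_simp
  calc ((2 * k + 1 : ℕ) : ℝ) ^ d * rexp (-x ^ β / 2) * x ^ 2
      ≤ (3 * x) ^ d * rexp (-x ^ β / 2) * x ^ 2 := by
        refine mul_le_mul_of_nonneg_right (mul_le_mul_of_nonneg_right h3 hE) (by positivity)
    _ = (3:ℝ) ^ d * (x ^ (d + 2) * rexp (-x ^ β / 2)) := by
        rw [mul_pow, pow_add]
        ring
    _ ≤ 1 := key

lemma tsum_Nz_le (d : ℕ) (q : ℕ → ℝ≥0∞) :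
    ∑' z : Fin d → ℤ, q (Nz z) ≤ ∑' k : ℕ, (((2 * k + 1) ^ d : ℕ) : ℝ≥0∞) * q k := by
  classical
  rw [ENNReal.tsum_eq_iSup_sum]
  refine iSup_le fun F => ?_
  set n := F.sup Nz with hn
  have hF : F ⊆ box d n := fun z hz => mem_box.mpr (Finset.le_sup hz)
  calc ∑ z ∈ F, q (Nz z)
      ≤ ∑ z ∈ box d n, q (Nz z) := Finset.sum_le_sum_of_subset hF
    _ = ∑ z ∈ (box d n).filter (fun z => Nz z ∈ Finset.range (n+1)), q (Nz z) := by
        rw [Finset.filter_true_of_mem]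
        intro z hz
        simp only [Finset.mem_range]
        exact Nat.lt_succ_of_le (mem_box.mp hz)
    _ = ∑ k ∈ Finset.range (n+1), ∑ z ∈ (box d n).filter (fun z => Nz z = k), q k :=
        (Finset.sum_fiberwise_eq_sum_filter' (box d n) (Finset.range (n+1)) Nz q).symm
    _ ≤ ∑ k ∈ Finset.range (n+1), (((2 * k + 1) ^ d : ℕ) : ℝ≥0∞) * q k := by
        refine Finset.sum_le_sum fun k _ => ?_
        rw [Finset.sum_const, nsmul_eq_mul]
        refine mul_le_mul_left ?_ _
        have hsub : (box d n).filter (fun z => Nz z = k) ⊆ box d k := by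
          intro z hz
          rw [mem_box]
          exact le_of_eq (Finset.mem_filter.mp hz).2
        calc (((box d n).filter (fun z => Nz z = k)).card : ℝ≥0∞)
            ≤ ((box d k).card : ℝ≥0∞) := by
              exact_mod_cast Nat.cast_le.mpr (Finset.card_le_card hsub)
          _ = (((2 * k + 1) ^ d : ℕ) : ℝ≥0∞) := by rw [card_box]
    _ ≤ ∑' k : ℕ, (((2 * k + 1) ^ d : ℕ) : ℝ≥0∞) * q k := ENNReal.sum_le_tsum _

lemma B_ne_top (d : ℕ) {β : ℝ} (hβ : 0 < β) :
    (∑' k : ℕ, (((2 * k + 1) ^ d : ℕ) : ℝ≥0∞) * ENNReal.ofReal (rexp (-(k : ℝ) ^ β / 2)))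
      ≠ ∞ := by
  have hsum := summable_series d hβ
  have hterm : ∀ k : ℕ, (((2 * k + 1) ^ d : ℕ) : ℝ≥0∞) * ENNReal.ofReal (rexp (-(k : ℝ) ^ β / 2))
      = ENNReal.ofReal (((2 * k + 1 : ℕ) : ℝ) ^ d * rexp (-(k : ℝ) ^ β / 2)) := by
    intro k
    rw [ENNReal.ofReal_mul (by positivity)]
    congr 1
    rw [← ENNReal.ofReal_natCast ((2 * k + 1) ^ d)]
    congr 1
    push_cast
    ring
  simp_rw [hterm]
  rw [← ENNReal.ofReal_tsum_of_nonneg (fun k => by positivity) hsum]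
  exact ENNReal.ofReal_ne_top


/-- the configuration measure of a left ray, counted -/
lemma config_Iic {d : ℕ} (α : ℝ) (g' : (Fin d → ℤ) → ℝ) (Sset : Set (Fin d → ℤ)) {c : ℝ}
    {n : ℕ} (h : ∀ z : Fin d → ℤ, (‖z‖ ^ α + g' z ≤ c ↔ Nz z ≤ n)) :
    latticeConfig α g' Sset (Iic c)
      = ((@Finset.filter _ (fun z => z ∉ Sset) (Classical.decPred _) (box d n)).card : ℝ≥0∞)
      := by
  classical
  rw [latticeConfig, Measure.sum_apply _ measurableSet_Iic]
  have hdirac : ∀ z : {z : Fin d → ℤ // z ∉ Sset},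
      Measure.dirac (‖z.1‖ ^ α + g' z.1) (Iic c) = if Nz z.1 ≤ n then (1 : ℝ≥0∞) else 0 := by
    intro z
    rw [Measure.dirac_apply' _ measurableSet_Iic]
    by_cases hz : Nz z.1 ≤ n
    · rw [if_pos hz,
        Set.indicator_of_mem (show (‖z.1‖ ^ α + g' z.1) ∈ Iic c from (h z.1).mpr hz)
          (1 : ℝ → ℝ≥0∞)]
      rfl
    · rw [if_neg hz,
        Set.indicator_of_notMem
          (show (‖z.1‖ ^ α + g' z.1) ∉ Iic c from fun hc => hz ((h z.1).mp hc))
          (1 : ℝ → ℝ≥0∞)]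
  simp_rw [hdirac]
  rw [tsum_eq_sum (s := (box d n).subtype (fun z => z ∉ Sset))
    (fun z hz => if_neg (fun hc => hz (Finset.mem_subtype.mpr (mem_box.mpr hc))))]
  rw [Finset.sum_congr rfl (fun z hz => if_pos (mem_box.mp (Finset.mem_subtype.mp hz)))]
  rw [Finset.sum_const, nsmul_eq_mul, mul_one, Finset.card_subtype]
  congr!

lemma measurable_config {d : ℕ} {Ω : Type*} [MeasurableSpace Ω] (α : ℝ)
    (g : (Fin d → ℤ) → Ω → ℝ) (hmeas : ∀ z, Measurable (g z)) (Sset : Set (Fin d → ℤ)) :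
    Measurable (fun ω => latticeConfig α (fun z => g z ω) Sset) := by
  refine Measure.measurable_of_measurable_coe _ fun s hs => ?_
  simp_rw [latticeConfig, Measure.sum_apply _ hs, Measure.dirac_apply' _ hs]
  refine Measurable.ennreal_tsum fun z => ?_
  exact (measurable_one.indicator hs).comp ((hmeas z.1).const_add _)

lemma key {d : ℕ} (hα : 1 < α) (g' : (Fin d → ℤ) → ℝ)
    (hfin : {z : Fin d → ℤ | ¬ (z ≠ 0 ∧ 2 * |g' z| < gapR α (Nz z))}.Finite) :
    ∀ᶠ n : ℕ in atTop, ∀ z : Fin d → ℤ, (‖z‖ ^ α + g' z ≤ cseq α n ↔ Nz z ≤ n) := by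
  classical
  set Bad := {z : Fin d → ℤ | ¬ (z ≠ 0 ∧ 2 * |g' z| < gapR α (Nz z))} with hBad
  obtain ⟨M, hM⟩ : ∃ M, ∀ z ∈ Bad, ‖z‖ ^ α + g' z ≤ M := by
    obtain ⟨M, hM⟩ := (hfin.image (fun z => ‖z‖ ^ α + g' z)).bddAbove
    exact ⟨M, fun z hz => hM (Set.mem_image_of_mem _ hz)⟩
  filter_upwards [(cseq_tendsto hα).eventually_ge_atTop M,
    eventually_ge_atTop (hfin.toFinset.sup Nz)] with n hn1 hn2
  intro z
  by_cases hz : z ∈ Bad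
  · constructor
    · intro _
      exact le_trans (Finset.le_sup (f := Nz) (hfin.mem_toFinset.mpr hz)) hn2
    · intro _
      exact le_trans (hM z hz) hn1
  · rw [hBad, Set.mem_setOf_eq, not_not] at hz
    obtain ⟨hz0, hzg⟩ := hz
    have hk1 : 1 ≤ Nz z := Nz_pos_of_ne_zero hz0
    have habs := abs_lt.mp (by linarith : |g' z| < gapR α (Nz z) / 2)
    rw [norm_eq_Nz]
    constructor
    · intro hle
      by_contra hgt
      push_neg at hgt
      have hdown := down_bound hα (k := Nz z) (n := n) hgt
      linarith [habs.1]
    · intro hkn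
      have h1 : (Nz z : ℝ) ^ α + g' z ≤ (Nz z : ℝ) ^ α + gapR α (Nz z) / 2 := by
        linarith [habs.2]
      exact le_trans h1 (le_trans (up_bound hα hk1) (cseq_mono hα hkn))


end DelSingAux

open DelSingAux

/-- If `α > 1` and each `g_z` is `N(0, σ²)`-distributed (with no assumption on the joint
distribution), then `Π = {‖z‖^α + g_z}_{z ∈ ℤ^d}` is deletion singular: for every finite
nonempty `S`, the laws of `Π` and `Π_S` are mutually singular after completion. -/
theorem deletion_singular_of_one_lt_alpha
    (d : ℕ) (hd : 1 ≤ d) (σ : ℝ) (hσ : 0 < σ) (α : ℝ) (hα : 1 < α)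
    {Ω : Type*} [MeasurableSpace Ω] (P : Measure Ω) [IsProbabilityMeasure P]
    (g : (Fin d → ℤ) → Ω → ℝ) (hmeas : ∀ z, Measurable (g z))
    (hlaw : ∀ z, P.map (g z) = gaussianReal 0 ⟨σ ^ 2, sq_nonneg σ⟩)
    (S : Finset (Fin d → ℤ)) (hS : S.Nonempty) :
    ∃ A : Set (Measure ℝ),
      P.map (fun ω => latticeConfig α (fun z => g z ω) (∅ : Set (Fin d → ℤ))) Aᶜ = 0 ∧
      P.map (fun ω => latticeConfig α (fun z => g z ω) (↑S : Set (Fin d → ℤ))) A = 0 := by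
  classical
  set v : ℝ≥0 := ⟨σ ^ 2, sq_nonneg σ⟩ with hvdef
  have hv : v ≠ 0 := by
    intro h
    have : (v : ℝ) = 0 := by rw [h]; rfl
    exact (pow_ne_zero 2 (ne_of_gt hσ)) this
  set β : ℝ := α - 1 with hβdef
  have hβ : 0 < β := by rw [hβdef]; linarith
  -- the exceptional events
  set E : (Fin d → ℤ) → Set Ω :=
    fun z => (g z) ⁻¹' {x : ℝ | gapR α (Nz z) / 2 ≤ |x|} with hEdef
  have habs_meas : ∀ t : ℝ, MeasurableSet {x : ℝ | t ≤ |x|} :=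
    fun t => measurableSet_le measurable_const measurable_abs
  -- tail bound on each event
  set C : ℝ≥0∞ := ENNReal.ofReal (2 * rexp ((v : ℝ) / 2)) with hCdef
  have hPE : ∀ z : Fin d → ℤ,
      P (E z) ≤ C * ENNReal.ofReal (rexp (-(Nz z : ℝ) ^ β / 2)) := by
    intro z
    have hmap : P (E z) = gaussianReal 0 v {x : ℝ | gapR α (Nz z) / 2 ≤ |x|} := by
      rw [hEdef, ← Measure.map_apply (hmeas z) (habs_meas _), hlaw z]
    rcases Nat.eq_zero_or_pos (Nz z) with h0 | hpos
    · have h1 : P (E z) ≤ 1 := prob_le_one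
      have h2 : (1 : ℝ≥0∞) ≤ C * ENNReal.ofReal (rexp (-(Nz z : ℝ) ^ β / 2)) := by
        rw [h0]
        simp only [Nat.cast_zero]
        rw [Real.zero_rpow (ne_of_gt hβ)]
        norm_num
        rw [hCdef, ← ENNReal.ofReal_one]
        refine ENNReal.ofReal_le_ofReal ?_
        nlinarith [Real.one_le_exp (by positivity : (0:ℝ) ≤ (v : ℝ) / 2)]
      exact le_trans h1 h2
    · rw [hmap]
      refine le_trans (gaussianReal_tail_abs hv _) ?_
      rw [hCdef, ENNReal.ofReal_mul (by positivity)]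
      refine mul_le_mul_right (ENNReal.ofReal_le_ofReal ?_) _
      refine Real.exp_le_exp.mpr ?_
      have := gap_lower hα hpos
      rw [← hβdef] at this
      linarith
  -- Borel-Cantelli
  have hsum : ∑' z : Fin d → ℤ, P (E z) ≠ ∞ := by
    refine ne_top_of_le_ne_top ?_ (ENNReal.tsum_le_tsum hPE)
    rw [ENNReal.tsum_mul_left]
    refine ENNReal.mul_ne_top ENNReal.ofReal_ne_top ?_
    exact ne_top_of_le_ne_top (B_ne_top d hβ)
      (tsum_Nz_le d (fun k => ENNReal.ofReal (rexp (-(k : ℝ) ^ β / 2))))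
  have hBC : ∀ᵐ ω ∂P, {z : Fin d → ℤ | ω ∈ E z}.Finite := ae_finite_setOf_mem hsum
  have hnull : P {ω | ¬ {z : Fin d → ℤ | ω ∈ E z}.Finite} = 0 := by
    exact ae_iff.mp hBC
  -- good omegas give eventual exact counts
  have hkeyω : ∀ ω : Ω, {z : Fin d → ℤ | ω ∈ E z}.Finite →
      ∀ᶠ n : ℕ in atTop, ∀ z : Fin d → ℤ,
        (‖z‖ ^ α + g z ω ≤ cseq α n ↔ Nz z ≤ n) := by
    intro ω hfin
    refine key hα (fun z => g z ω) (Set.Finite.subset (hfin.insert 0) ?_)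
    intro z hz
    simp only [Set.mem_setOf_eq, not_and, not_lt, not_not] at hz
    rcases eq_or_ne z 0 with h0 | h0
    · exact Set.mem_insert_iff.mpr (Or.inl h0)
    · refine Set.mem_insert_iff.mpr (Or.inr ?_)
      have := hz h0
      simp only [Set.mem_setOf_eq, hEdef, Set.mem_preimage]
      linarith
  -- the distinguishing set of measures
  set A : Set (Measure ℝ) :=
    {μ | ∀ᶠ n : ℕ in atTop, μ (Iic (cseq α n)) = (((2 * n + 1) ^ d : ℕ) : ℝ≥0∞)} with hAdef
  have hA_meas : MeasurableSet A := by
    have : A = ⋃ m : ℕ, ⋂ n : ℕ, ⋂ (_ : m ≤ n),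
        (fun μ : Measure ℝ => μ (Iic (cseq α n))) ⁻¹' {(((2 * n + 1) ^ d : ℕ) : ℝ≥0∞)} := by
      ext μ
      simp only [hAdef, Set.mem_setOf_eq, eventually_atTop, Set.mem_iUnion, Set.mem_iInter,
        Set.mem_preimage, Set.mem_singleton_iff]
    rw [this]
    refine MeasurableSet.iUnion fun m => MeasurableSet.iInter fun n =>
      MeasurableSet.iInter fun _ => ?_
    exact Measure.measurable_coe measurableSet_Iic (measurableSet_singleton _)
  refine ⟨A, ?_, ?_⟩
  · rw [Measure.map_apply (measurable_config α g hmeas _) hA_meas.compl]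
    refine measure_mono_null ?_ hnull
    intro ω hω
    simp only [Set.mem_preimage, Set.mem_compl_iff] at hω
    simp only [Set.mem_setOf_eq]
    intro hfin
    refine hω ?_
    rw [hAdef]
    simp only [Set.mem_setOf_eq]
    filter_upwards [hkeyω ω hfin] with n hn
    rw [config_Iic α (fun z => g z ω) (∅ : Set (Fin d → ℤ)) hn]
    have hfe : (@Finset.filter _ (fun z => z ∉ (∅ : Set (Fin d → ℤ)))
        (Classical.decPred _) (box d n)) = box d n := by
      ext z; simp
    rw [hfe, card_box]
  · rw [Measure.map_apply (measurable_config α g hmeas _) hA_meas]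
    refine measure_mono_null ?_ hnull
    intro ω hω
    simp only [Set.mem_preimage] at hω
    simp only [Set.mem_setOf_eq]
    intro hfin
    rw [hAdef] at hω
    simp only [Set.mem_setOf_eq] at hω
    obtain ⟨n, hn1, hn2, hn3⟩ :=
      ((hkeyω ω hfin).and (hω.and (eventually_ge_atTop (S.sup Nz)))).exists
    have hSsub : S ⊆ box d n := fun z hz => mem_box.mpr (le_trans (Finset.le_sup hz) hn3)
    rw [config_Iic α (fun z => g z ω) (↑S : Set (Fin d → ℤ)) hn1] at hn2
    have hfilter : (@Finset.filter _ (fun z => z ∉ (↑S : Set (Fin d → ℤ)))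
        (Classical.decPred _) (box d n)) = box d n \ S := by
      ext z
      simp [Finset.mem_sdiff, Finset.mem_filter]
    rw [hfilter] at hn2
    have hcard : (box d n \ S).card = (2 * n + 1) ^ d := by exact_mod_cast hn2
    rw [Finset.card_sdiff_of_subset hSsub, card_box] at hcard
    have hle : S.card ≤ (box d n).card := Finset.card_le_card hSsub
    rw [card_box] at hle
    have hpos : 1 ≤ S.card := hS.card_pos
    omega
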